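/- Let n ≥ 3 and let R ∈ S²_B(so(n)) be a 2-nonnegative curvature operator, with λ_min the smallest eigenvalue of R. Then every eigenvalue of the Ricci tensor of R is at least (n−3)·|λ_min|; that is, Ric(R) − (n−3)·|λ_min|·id is positive semidefinite. -/

import Mathlib

/-!
Common setup: we identify ⋀²ℝⁿ with the Lie algebra `so n` of real skew-symmetric
`n × n` matrices, sending `eᵢ ∧ eⱼ` to the rotation by `π/2` in the plane spanned by
`eᵢ, eⱼ`; the inner product on `so n` is `⟪A, B⟫ = -(1/2)·tr (A * B)`, and under this
identification `v ∧ w` corresponds to the skew-symmetric matrix `v wᵀ - w vᵀ`, while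
the wedge `A ∧ B` of two endomorphisms of `ℝⁿ` acts on a skew matrix `M` by
`M ↦ (1/2)(A M Bᵀ + B M Aᵀ)` (the unique linear extension of
`v∧w ↦ (1/2)(Av ∧ Bw + Bv ∧ Aw)`).
-/

noncomputable section

namespace BW

open Matrix

abbrev Mat (n : ℕ) := Matrix (Fin n) (Fin n) ℝ

/-- `so n`: the space of real skew-symmetric `n × n` matrices (≅ ⋀²ℝⁿ). -/
def so (n : ℕ) : Submodule ℝ (Mat n) where
  carrier := {A | Aᵀ = -A}
  add_mem' := by
    intro A B hA hB
    simp only [Set.mem_setOf_eq] at *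
    rw [Matrix.transpose_add, hA, hB, neg_add]
  zero_mem' := by simp
  smul_mem' := by
    intro c A hA
    simp only [Set.mem_setOf_eq] at *
    rw [Matrix.transpose_smul, hA, smul_neg]

variable {n : ℕ}

lemma mem_so_iff {A : Mat n} : A ∈ so n ↔ Aᵀ = -A := Iff.rfl

/-- The inner product `⟨A,B⟩ = -(1/2)·tr(AB)` on `so n`. -/
def ip (A B : so n) : ℝ := -(1/2) * Matrix.trace ((A : Mat n) * (B : Mat n))

/-- `ip` as a linear map in the second variable. -/
def ipL (A : so n) : so n →ₗ[ℝ] ℝ where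
  toFun B := ip A B
  map_add' B C := by
    simp only [ip, Submodule.coe_add, Matrix.mul_add, Matrix.trace_add]; ring
  map_smul' c B := by
    simp only [ip, SetLike.val_smul, Matrix.mul_smul, Matrix.trace_smul, smul_eq_mul,
      RingHom.id_apply]; ring

/-- The Lie bracket (matrix commutator) on `so n`. -/
def brk (A B : so n) : so n :=
  ⟨(A : Mat n) * (B : Mat n) - (B : Mat n) * (A : Mat n), by
    have hA : (A : Mat n)ᵀ = -(A : Mat n) := A.2
    have hB : (B : Mat n)ᵀ = -(B : Mat n) := B.2
    rw [mem_so_iff, Matrix.transpose_sub, Matrix.transpose_mul, Matrix.transpose_mul, hA, hB]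
    noncomm_ring⟩

/-- Auxiliary linear map underlying `A ∧ B`. -/
def wedgeAux (A B : Mat n) : Mat n →ₗ[ℝ] Mat n where
  toFun M := (1/2 : ℝ) • (A * M * Bᵀ + B * M * Aᵀ)
  map_add' M N := by
    simp only [mul_add, add_mul, smul_add]
    module
  map_smul' c M := by
    simp only [mul_smul_comm, smul_mul_assoc, RingHom.id_apply]
    module

lemma wedgeAux_mem (A B : Mat n) : ∀ M ∈ so n, wedgeAux A B M ∈ so n := by
  intro M hM
  rw [mem_so_iff] at hM ⊢
  show ((1/2 : ℝ) • (A * M * Bᵀ + B * M * Aᵀ))ᵀ = -((1/2 : ℝ) • (A * M * Bᵀ + B * M * Aᵀ))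
  rw [Matrix.transpose_smul, Matrix.transpose_add, Matrix.transpose_mul, Matrix.transpose_mul,
    Matrix.transpose_mul, Matrix.transpose_mul, Matrix.transpose_transpose,
    Matrix.transpose_transpose, hM]
  simp only [Matrix.neg_mul, Matrix.mul_neg, Matrix.mul_assoc, smul_neg, neg_add, smul_add]
  abel

/-- The wedge `A ∧ B` of two endomorphisms of ℝⁿ, as an endomorphism of `so n ≅ ⋀²ℝⁿ`:
the unique linear map with `(A ∧ B)(v ∧ w) = (1/2)(Av ∧ Bw + Bv ∧ Aw)`. -/
def wedge (A B : Mat n) : Module.End ℝ (so n) :=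
  (wedgeAux A B).restrict (p := so n) (q := so n) (wedgeAux_mem A B)

/-- The index set of pairs `i < j`. -/
def pairs (n : ℕ) : Finset (Fin n × Fin n) := Finset.univ.filter fun p => p.1 < p.2

/-- The standard basis vector `eᵢ` of ℝⁿ. -/
def evec (i : Fin n) : Fin n → ℝ := fun k => if k = i then 1 else 0

/-- `v ∧ w`, as an element of `so n ≅ ⋀²ℝⁿ`. -/
def vwedge (v w : Fin n → ℝ) : so n :=
  ⟨Matrix.of fun i j => v i * w j - w i * v j, by
    rw [mem_so_iff]
    ext i j
    simp only [Matrix.transpose_apply, Matrix.of_apply, Matrix.neg_apply]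
    ring⟩

/-- The orthonormal basis vector `eᵢ ∧ eⱼ` of `so n ≅ ⋀²ℝⁿ`. -/
def bvec (i j : Fin n) : so n := vwedge (evec i) (evec j)

/-- Hamilton's sharp product `R # S`: the self-adjoint endomorphism of `so n` determined by
`⟨(R#S)h, h⟩ = (1/2)·Σ_{α,β} ⟨[R(b_α), S(b_β)], h⟩·⟨[b_α, b_β], h⟩`,
where `(b_α)` is the orthonormal basis `(eᵢ ∧ eⱼ)_{i<j}` of `so n`. -/
def sharp (R S : Module.End ℝ (so n)) : Module.End ℝ (so n) :=
  (1/4 : ℝ) • ∑ p ∈ pairs n, ∑ q ∈ pairs n,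
    ((ipL (brk (R (bvec p.1 p.2)) (S (bvec q.1 q.2)))).smulRight
        (brk (bvec p.1 p.2) (bvec q.1 q.2))
      + (ipL (brk (bvec p.1 p.2) (bvec q.1 q.2))).smulRight
        (brk (R (bvec p.1 p.2)) (S (bvec q.1 q.2))))

/-- The right-hand side `R² + R^#` of Hamilton's ODE. -/
def Qode (R : Module.End ℝ (so n)) : Module.End ℝ (so n) := R * R + sharp R R

/-- The coordinates `R_{ijkl} = ⟨R(eᵢ∧eⱼ), e_k∧e_l⟩` of an endomorphism of `so n`. -/
def Rcoord (R : Module.End ℝ (so n)) (i j k l : Fin n) : ℝ := ip (R (bvec i j)) (bvec k l)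

/-- Self-adjointness with respect to the inner product `ip`. -/
def selfAdjEnd (R : Module.End ℝ (so n)) : Prop := ∀ X Y : so n, ip (R X) Y = ip X (R Y)

/-- A curvature operator: a self-adjoint endomorphism of `so n ≅ ⋀²ℝⁿ` satisfying the
first Bianchi identity.  (`isCurvOp` carves out `S²_B(so n)`.) -/
def isCurvOp (R : Module.End ℝ (so n)) : Prop :=
  selfAdjEnd R ∧
    ∀ i j k l : Fin n, Rcoord R i j k l + Rcoord R j k i l + Rcoord R k i j l = 0

/-- The Ricci tensor `Ric_{ij} = Σ_k R_{ikjk}` of `R`. -/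
def RicM (R : Module.End ℝ (so n)) : Mat n := Matrix.of fun i j => ∑ k, Rcoord R i k j k

/-- `λ̄ = tr(Ric)/n`. -/
def lamb (R : Module.End ℝ (so n)) : ℝ := Matrix.trace (RicM R) / (n : ℝ)

/-- The traceless Ricci tensor `Ric₀ = Ric - (tr Ric / n)·id`. -/
def Ric0 (R : Module.End ℝ (so n)) : Mat n := RicM R - lamb R • (1 : Mat n)

/-- `σ = tr(Ric₀²)/n`. -/
def sigmaR (R : Module.End ℝ (so n)) : ℝ := Matrix.trace (Ric0 R * Ric0 R) / (n : ℝ)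

/-- `R_I = (λ̄/(n-1))·(id ∧ id)`, the projection of `R` onto `⟨I⟩`. -/
def RI (R : Module.End ℝ (so n)) : Module.End ℝ (so n) :=
  (lamb R / ((n : ℝ) - 1)) • wedge (1 : Mat n) (1 : Mat n)

/-- `R_{Ric₀} = (2/(n-2))·(Ric₀ ∧ id)`, the projection of `R` onto `⟨Ric₀⟩`. -/
def RRic0 (R : Module.End ℝ (so n)) : Module.End ℝ (so n) :=
  (2 / ((n : ℝ) - 2)) • wedge (Ric0 R) (1 : Mat n)

/-- The linear map `ℓ_{a,b}(R) = R + 2(n-1)a·R_I + (n-2)b·R_{Ric₀}`. -/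
def lab (a b : ℝ) (R : Module.End ℝ (so n)) : Module.End ℝ (so n) :=
  R + (2 * ((n : ℝ) - 1) * a) • RI R + (((n : ℝ) - 2) * b) • RRic0 R

/-- Positive semidefiniteness of the quadratic form of an endomorphism of `so n`. -/
def posSemidefEnd (R : Module.End ℝ (so n)) : Prop := ∀ X : so n, 0 ≤ ip (R X) X

/-- Positive definiteness of the quadratic form of an endomorphism of `so n`. -/
def posDefEnd (R : Module.End ℝ (so n)) : Prop := ∀ X : so n, X ≠ 0 → 0 < ip (R X) X

/-- `R` is 2-nonnegative: the sum of its two smallest eigenvalues is nonnegative;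
equivalently (Ky Fan), `q_R(X) + q_R(Y) ≥ 0` for all orthonormal pairs `X, Y`. -/
def twoNonneg (R : Module.End ℝ (so n)) : Prop :=
  ∀ X Y : so n, ip X X = 1 → ip Y Y = 1 → ip X Y = 0 → 0 ≤ ip (R X) X + ip (R Y) Y

/-- The (Frobenius) norm of an endomorphism of `so n`, computed in the orthonormal
basis `(eᵢ ∧ eⱼ)_{i<j}`. -/
def endNorm (R : Module.End ℝ (so n)) : ℝ :=
  Real.sqrt (∑ p ∈ pairs n, ip (R (bvec p.1 p.2)) (R (bvec p.1 p.2)))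

/-- The tangent cone `T_R C`: the closure of `{t·(S - R) : S ∈ C, t ≥ 0}`. -/
def tangCone (C : Set (Module.End ℝ (so n))) (R : Module.End ℝ (so n)) :
    Set (Module.End ℝ (so n)) :=
  {X | ∀ ε > 0, ∃ S ∈ C, ∃ t : ℝ, 0 ≤ t ∧ endNorm (X - t • (S - R)) < ε}

/-- `C` is a closed subset of the space of endomorphisms of `so n`. -/
def isClosedSet (C : Set (Module.End ℝ (so n))) : Prop :=
  ∀ X, (∀ ε > 0, ∃ Y ∈ C, endNorm (X - Y) < ε) → X ∈ C

/-- The interior of `C` relative to the subspace `S²_B(so n)` of curvature operators. -/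
def interiorCurv (C : Set (Module.End ℝ (so n))) : Set (Module.End ℝ (so n)) :=
  {X | isCurvOp X ∧ ∃ ε > 0, ∀ Y, isCurvOp Y → endNorm (Y - X) < ε → Y ∈ C}

/-- Auxiliary linear map `M ↦ g M gᵀ` on matrices. -/
def conjAux (g : Mat n) : Mat n →ₗ[ℝ] Mat n where
  toFun M := g * M * gᵀ
  map_add' M N := by simp only [mul_add, add_mul]
  map_smul' c M := by simp only [mul_smul_comm, smul_mul_assoc, RingHom.id_apply]

/-- `⋀²g` : the action `M ↦ g M gᵀ` of `g` on `so n ≅ ⋀²ℝⁿ` (for `g` orthogonal this is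
the second exterior power of `g`). -/
def conjSo (g : Mat n) : Module.End ℝ (so n) :=
  (conjAux g).restrict (p := so n) (q := so n) (fun M hM => by
    rw [mem_so_iff] at hM ⊢
    show (g * M * gᵀ)ᵀ = -(g * M * gᵀ)
    rw [Matrix.transpose_mul, Matrix.transpose_mul, Matrix.transpose_transpose, hM]
    simp only [Matrix.neg_mul, Matrix.mul_neg, Matrix.mul_assoc])

/-- The action `g · R = (⋀²g) ∘ R ∘ (⋀²g)⁻¹` of an orthogonal matrix `g`
(whose inverse is `gᵀ`) on endomorphisms of `so n`. -/
def onAct (g : Mat n) (R : Module.End ℝ (so n)) : Module.End ℝ (so n) :=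
  conjSo g * R * conjSo gᵀ

/-- Two sets are at Hausdorff distance at most `ε` from each other. -/
def hdClose (A B : Set (Module.End ℝ (so n))) (ε : ℝ) : Prop :=
  (∀ X ∈ A, ∃ Y ∈ B, endNorm (X - Y) ≤ ε) ∧ ∀ Y ∈ B, ∃ X ∈ A, endNorm (X - Y) ≤ ε

/-- The truncation `C ∩ {‖R‖ ≤ 1}`. -/
def truncSet (C : Set (Module.End ℝ (so n))) : Set (Module.End ℝ (so n)) :=
  {R ∈ C | endNorm R ≤ 1}


section Helpers

variable {n : ℕ}

lemma skew_apply (A : so n) (i j : Fin n) : (A : Mat n) j i = -(A : Mat n) i j := by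
  have h := A.2
  rw [mem_so_iff] at h
  have h2 := congrFun (congrFun h i) j
  simpa [Matrix.transpose_apply] using h2

lemma ip_expand (A B : so n) :
    ip A B = -(1/2) * ∑ i, ∑ j, (A : Mat n) i j * (B : Mat n) j i := by
  simp [ip, Matrix.trace, Matrix.mul_apply, Matrix.diag]

lemma ip_comm (A B : so n) : ip A B = ip B A := by
  unfold ip
  rw [Matrix.trace_mul_comm]

lemma ip_smul_left (c : ℝ) (A B : so n) : ip (c • A) B = c * ip A B := by
  have : ((c • A : so n) : Mat n) = c • (A : Mat n) := rfl
  unfold ip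
  rw [this, Matrix.smul_mul, Matrix.trace_smul]
  simp; ring

lemma ip_smul_right (c : ℝ) (A B : so n) : ip A (c • B) = c * ip A B := by
  rw [ip_comm, ip_smul_left, ip_comm]

lemma ip_add_left (A B C : so n) : ip (A + B) C = ip A C + ip B C := by
  have : ((A + B : so n) : Mat n) = (A : Mat n) + (B : Mat n) := rfl
  unfold ip
  rw [this, Matrix.add_mul, Matrix.trace_add]
  ring

lemma ip_add_right (A B C : so n) : ip A (B + C) = ip A B + ip A C := by
  rw [ip_comm, ip_add_left, ip_comm A B, ip_comm A C]

lemma ip_sub_left (A B C : so n) : ip (A - B) C = ip A C - ip B C := by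
  have : ((A - B : so n) : Mat n) = (A : Mat n) - (B : Mat n) := rfl
  unfold ip
  rw [this, Matrix.sub_mul, Matrix.trace_sub]
  ring

lemma ip_sub_right (A B C : so n) : ip A (B - C) = ip A B - ip A C := by
  rw [ip_comm, ip_sub_left, ip_comm B A, ip_comm C A]

lemma ip_zero_left (B : so n) : ip 0 B = 0 := by
  have : ((0 : so n) : Mat n) = 0 := rfl
  unfold ip
  rw [this, Matrix.zero_mul, Matrix.trace_zero]
  ring

lemma ip_sum_left {ι : Type*} (s : Finset ι) (f : ι → so n) (B : so n) :
    ip (∑ i ∈ s, f i) B = ∑ i ∈ s, ip (f i) B := by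
  classical
  induction s using Finset.cons_induction with
  | empty => simpa using ip_zero_left B
  | cons a s ha ih => rw [Finset.sum_cons, Finset.sum_cons, ip_add_left, ih]

lemma ip_sum_right {ι : Type*} (s : Finset ι) (f : ι → so n) (B : so n) :
    ip B (∑ i ∈ s, f i) = ∑ i ∈ s, ip B (f i) := by
  rw [ip_comm, ip_sum_left]
  exact Finset.sum_congr rfl fun i _ => ip_comm _ _

lemma vwedge_coe (v w : Fin n → ℝ) (i j : Fin n) :
    ((vwedge v w : so n) : Mat n) i j = v i * w j - w i * v j := rfl

lemma ip_self_eq (A : so n) :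
    ip A A = (1/2) * ∑ i, ∑ j, (A : Mat n) i j * (A : Mat n) i j := by
  rw [ip_expand]
  have h : ∀ i j : Fin n, (A : Mat n) i j * (A : Mat n) j i
      = -((A : Mat n) i j * (A : Mat n) i j) := by
    intro i j; rw [skew_apply]; ring
  simp only [h, Finset.sum_neg_distrib]
  ring

lemma ip_self_nonneg (A : so n) : 0 ≤ ip A A := by
  rw [ip_self_eq]
  have : 0 ≤ ∑ i, ∑ j, (A : Mat n) i j * (A : Mat n) i j :=
    Finset.sum_nonneg fun i _ => Finset.sum_nonneg fun j _ => mul_self_nonneg _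
  linarith

lemma ip_self_pos (A : so n) (hA : A ≠ 0) : 0 < ip A A := by
  rw [ip_self_eq]
  have hA' : (A : Mat n) ≠ 0 := fun h => hA (Subtype.ext h)
  have : ∃ i j, (A : Mat n) i j ≠ 0 := by
    by_contra h
    push_neg at h
    exact hA' (by ext i j; simpa using h i j)
  obtain ⟨i, j, hij⟩ := this
  have hpos : 0 < ∑ i, ∑ j, (A : Mat n) i j * (A : Mat n) i j := by
    refine Finset.sum_pos' (fun a _ => Finset.sum_nonneg fun b _ => mul_self_nonneg _) ?_
    refine ⟨i, Finset.mem_univ i, ?_⟩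
    refine Finset.sum_pos' (fun b _ => mul_self_nonneg _) ⟨j, Finset.mem_univ j, ?_⟩
    exact mul_self_pos.mpr hij
  linarith

end Helpers

section Helpers2

variable {n : ℕ}

lemma sum_comm3 (F : Fin n → Fin n → Fin n → ℝ) :
    ∑ i, ∑ j, ∑ k, F i j k = ∑ k, ∑ i, ∑ j, F i j k :=
  (Finset.sum_congr rfl fun i _ => Finset.sum_comm).trans Finset.sum_comm

lemma vwedge_ip (v w x y : Fin n → ℝ) :
    ip (vwedge v w) (vwedge x y)
      = (∑ i, v i * x i) * (∑ i, w i * y i) - (∑ i, v i * y i) * (∑ i, w i * x i) := by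
  rw [ip_expand]
  have h2 : (∑ i, ∑ j, ((vwedge v w : so n) : Mat n) i j * ((vwedge x y : so n) : Mat n) j i)
      = (∑ i, v i * y i) * (∑ j, w j * x j) - (∑ i, v i * x i) * (∑ j, w j * y j)
        - ((∑ i, w i * y i) * (∑ j, v j * x j) - (∑ i, w i * x i) * (∑ j, v j * y j)) := by
    simp only [Finset.sum_mul_sum]
    rw [← Finset.sum_sub_distrib, ← Finset.sum_sub_distrib, ← Finset.sum_sub_distrib]
    refine Finset.sum_congr rfl fun i _ => ?_
    rw [← Finset.sum_sub_distrib, ← Finset.sum_sub_distrib, ← Finset.sum_sub_distrib]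
    refine Finset.sum_congr rfl fun j _ => ?_
    rw [vwedge_coe, vwedge_coe]
    ring
  rw [h2]
  ring

lemma sum_evec_mul (f : Fin n → ℝ) (k : Fin n) : ∑ i, evec k i * f i = f k := by
  simp only [evec, ite_mul, one_mul, zero_mul]
  rw [Finset.sum_ite_eq' Finset.univ k f]
  simp

lemma sum_mul_evec (f : Fin n → ℝ) (k : Fin n) : ∑ i, f i * evec k i = f k := by
  have : ∀ i, f i * evec k i = evec k i * f i := fun i => mul_comm _ _
  simp only [this]
  exact sum_evec_mul f k

lemma sum_evec_mul' (f : Fin n → ℝ) (a : Fin n) : ∑ i, evec i a * f i = f a := by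
  simp only [evec, ite_mul, one_mul, zero_mul]
  rw [Finset.sum_ite_eq Finset.univ a f]
  simp

lemma vwedge_evec_self (v : Fin n → ℝ) (k : Fin n) :
    ip (vwedge v (evec k)) (vwedge v (evec k)) = (∑ i, v i * v i) - v k * v k := by
  rw [vwedge_ip, sum_mul_evec, sum_evec_mul, sum_mul_evec]
  simp [evec]

lemma ip_vwedge_evec (v : Fin n → ℝ) (k : Fin n) (X : so n) :
    ip (vwedge v (evec k)) X = -∑ i, (X : Mat n) k i * v i := by
  rw [ip_expand]
  have h : (∑ i, ∑ j, ((vwedge v (evec k) : so n) : Mat n) i j * (X : Mat n) j i)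
      = 2 * ∑ i, (X : Mat n) k i * v i := by
    have e1 : ∀ i j : Fin n, ((vwedge v (evec k) : so n) : Mat n) i j * (X : Mat n) j i
        = v i * (evec k j * (X : Mat n) j i) - evec k i * (v j * (X : Mat n) j i) := by
      intro i j; rw [vwedge_coe]; ring
    simp only [e1, Finset.sum_sub_distrib]
    have t1 : (∑ i, ∑ j, v i * (evec k j * (X : Mat n) j i)) = ∑ i, (X : Mat n) k i * v i := by
      refine Finset.sum_congr rfl fun i _ => ?_
      rw [← Finset.mul_sum, sum_evec_mul (fun j => (X : Mat n) j i) k]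
      ring
    have t2 : (∑ i, ∑ j, evec k i * (v j * (X : Mat n) j i))
        = -∑ i, (X : Mat n) k i * v i := by
      have e2 : ∀ i : Fin n, (∑ j, evec k i * (v j * (X : Mat n) j i))
          = evec k i * ∑ j, v j * (X : Mat n) j i := by
        intro i; rw [Finset.mul_sum]
      simp only [e2]
      rw [sum_evec_mul (fun i => ∑ j, v j * (X : Mat n) j i) k, ← Finset.sum_neg_distrib]
      refine Finset.sum_congr rfl fun j _ => ?_
      rw [skew_apply X k j]
      ring
    rw [t1, t2]
    ring
  rw [h]
  ring

end Helpers2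

section Helpers3

variable {n : ℕ}

lemma vwedge_evec_eq_sum (v : Fin n → ℝ) (k : Fin n) :
    vwedge v (evec k) = ∑ i, v i • bvec i k := by
  apply Subtype.ext
  have hc : ((∑ i, v i • bvec i k : so n) : Mat n) = ∑ i, v i • ((bvec i k : so n) : Mat n) := by
    simp
  rw [hc]
  ext a b
  rw [Matrix.sum_apply]
  simp only [Matrix.smul_apply, smul_eq_mul]
  have e1 : ∀ i : Fin n, v i * ((bvec i k : so n) : Mat n) a b
      = evec i a * (v i * evec k b) - evec i b * (v i * evec k a) := by
    intro i
    show v i * (evec i a * evec k b - evec k a * evec i b) = _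
    simp only [evec]
    by_cases hai : a = i <;> by_cases hbi : b = i <;> simp [hai, hbi] <;> ring
  simp only [e1, Finset.sum_sub_distrib]
  rw [sum_evec_mul' (fun i => v i * evec k b) a, sum_evec_mul' (fun i => v i * evec k a) b]
  rw [vwedge_coe]
  simp only [evec]
  ring

lemma quad_eq (R : Module.End ℝ (so n)) (v : Fin n → ℝ) (k : Fin n) :
    ip (R (vwedge v (evec k))) (vwedge v (evec k))
      = ∑ i, ∑ j, v i * v j * Rcoord R i k j k := by
  rw [vwedge_evec_eq_sum, map_sum, ip_sum_left]
  refine Finset.sum_congr rfl fun i _ => ?_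
  rw [_root_.map_smul, ip_smul_left, ip_sum_right, Finset.mul_sum]
  refine Finset.sum_congr rfl fun j _ => ?_
  rw [ip_smul_right]
  unfold Rcoord
  ring

lemma ric_quad (R : Module.End ℝ (so n)) (x : Fin n → ℝ) :
    x ⬝ᵥ (RicM R) *ᵥ x = ∑ k, ip (R (vwedge x (evec k))) (vwedge x (evec k)) := by
  simp only [quad_eq]
  rw [← sum_comm3 (fun i j k => x i * x j * Rcoord R i k j k)]
  simp only [dotProduct, Matrix.mulVec, RicM, Matrix.of_apply, dotProduct]
  refine Finset.sum_congr rfl fun i _ => ?_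
  rw [Finset.mul_sum]
  refine Finset.sum_congr rfl fun j _ => ?_
  rw [Finset.sum_mul, Finset.mul_sum]
  refine Finset.sum_congr rfl fun k _ => ?_
  ring

lemma ricM_symm (R : Module.End ℝ (so n)) (hsa : selfAdjEnd R) (i j : Fin n) :
    RicM R j i = RicM R i j := by
  show (∑ k, Rcoord R j k i k) = ∑ k, Rcoord R i k j k
  refine Finset.sum_congr rfl fun k _ => ?_
  unfold Rcoord
  rw [hsa, ip_comm]

lemma skew_sos (X : so n) (v : Fin n → ℝ) :
    ∑ k, (∑ i, (X : Mat n) k i * v i) ^ 2 ≤ ip X X * ∑ k, v k * v k := by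
  set A : Mat n := (X : Mat n) with hA
  set B : Fin n → ℝ := fun k => ∑ i, A k i * v i with hB
  have hBk : ∀ k : Fin n, (∑ i, A k i * v i) = B k := fun k => by rw [hB]
  have hAapp : ∀ i j : Fin n, A j i = -A i j := fun i j => skew_apply X i j
  have hBalt : ∀ j : Fin n, (∑ i, A i j * v i) = -B j := by
    intro j
    rw [← hBk j, ← Finset.sum_neg_distrib]
    refine Finset.sum_congr rfl fun i' _ => ?_
    rw [hAapp j i']
    ring
  have hT : 0 ≤ ∑ i, ∑ j, ∑ k, (A i j * v k + A j k * v i + A k i * v j) ^ 2 :=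
    Finset.sum_nonneg fun i _ => Finset.sum_nonneg fun j _ => Finset.sum_nonneg fun k _ =>
      sq_nonneg _
  set SA : ℝ := ∑ i, ∑ j, A i j * A i j with hSA
  set sv : ℝ := ∑ k, v k * v k with hsv
  set P : ℝ := ∑ k, B k ^ 2 with hP
  have hid : (∑ i, ∑ j, ∑ k, (A i j * v k + A j k * v i + A k i * v j) ^ 2)
      = 3 * (SA * sv) - 6 * P := by
    have e : ∀ i j k : Fin n, (A i j * v k + A j k * v i + A k i * v j) ^ 2
        = ((((A i j * A i j) * (v k * v k) + (A j k * A j k) * (v i * v i))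
          + (A k i * A k i) * (v j * v j))
          + 2 * ((A i j * v i) * (A j k * v k)))
          + (2 * ((A j k * v j) * (A k i * v i))
          + 2 * ((A i j * v j) * (A k i * v k))) := by
      intro i j k; ring
    simp only [e, Finset.sum_add_distrib]
    have hsq1 : (∑ i, ∑ j, ∑ k, (A i j * A i j) * (v k * v k)) = SA * sv := by
      simp only [← Finset.mul_sum, ← hsv]
      simp only [← Finset.sum_mul, hSA]
    have hsq2 : (∑ i, ∑ j, ∑ k, (A j k * A j k) * (v i * v i)) = SA * sv := by
      have h1 : ∀ i : Fin n, (∑ j, ∑ k, (A j k * A j k) * (v i * v i)) = SA * (v i * v i) := by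
        intro i
        simp only [← Finset.sum_mul, hSA]
      simp only [h1, ← Finset.mul_sum, ← hsv]
    have hsq3 : (∑ i, ∑ j, ∑ k, (A k i * A k i) * (v j * v j)) = SA * sv := by
      have h1 : ∀ i : Fin n, (∑ j, ∑ k, (A k i * A k i) * (v j * v j))
          = (∑ k, A k i * A k i) * sv := by
        intro i
        have h2 : ∀ j : Fin n, (∑ k, (A k i * A k i) * (v j * v j))
            = (∑ k, A k i * A k i) * (v j * v j) := by
          intro j; rw [Finset.sum_mul]
        simp only [h2, ← Finset.mul_sum, ← hsv]
      simp only [h1]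
      rw [← Finset.sum_mul, Finset.sum_comm, ← hSA]
    have hct1 : (∑ i, ∑ j, ∑ k, 2 * ((A i j * v i) * (A j k * v k))) = -2 * P := by
      have l1 : ∀ i j : Fin n, (∑ k, 2 * ((A i j * v i) * (A j k * v k)))
          = (2 * (A i j * v i)) * B j := by
        intro i j
        rw [← hBk j, Finset.mul_sum]
        exact Finset.sum_congr rfl fun k _ => by ring
      simp only [l1]
      rw [Finset.sum_comm]
      have l2 : ∀ j : Fin n, (∑ i, (2 * (A i j * v i)) * B j) = -2 * B j ^ 2 := by
        intro j
        have : (∑ i, (2 * (A i j * v i)) * B j) = (∑ i, A i j * v i) * (2 * B j) := by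
          rw [Finset.sum_mul]
          exact Finset.sum_congr rfl fun i _ => by ring
        rw [this, hBalt j]
        ring
      simp only [l2, ← Finset.mul_sum, ← hP]
    have hct2 : (∑ i, ∑ j, ∑ k, 2 * ((A j k * v j) * (A k i * v i))) = -2 * P := by
      rw [sum_comm3 (fun i j k => 2 * ((A j k * v j) * (A k i * v i)))]
      have l1 : ∀ k : Fin n, (∑ i, ∑ j, 2 * ((A j k * v j) * (A k i * v i))) = -2 * B k ^ 2 := by
        intro k
        have inner : ∀ i : Fin n, (∑ j, 2 * ((A j k * v j) * (A k i * v i)))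
            = (2 * (A k i * v i)) * (-B k) := by
          intro i
          rw [← hBalt k, Finset.mul_sum]
          exact Finset.sum_congr rfl fun j _ => by ring
        simp only [inner]
        have : (∑ i, (2 * (A k i * v i)) * (-B k)) = (∑ i, A k i * v i) * (2 * (-B k)) := by
          rw [Finset.sum_mul]
          exact Finset.sum_congr rfl fun i _ => by ring
        rw [this, hBk k]
        ring
      simp only [l1]
      simp only [← Finset.mul_sum, ← hP]
    have hct3 : (∑ i, ∑ j, ∑ k, 2 * ((A i j * v j) * (A k i * v k))) = -2 * P := by
      have l1 : ∀ i : Fin n, (∑ j, ∑ k, 2 * ((A i j * v j) * (A k i * v k))) = -2 * B i ^ 2 := by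
        intro i
        have inner : ∀ j : Fin n, (∑ k, 2 * ((A i j * v j) * (A k i * v k)))
            = (2 * (A i j * v j)) * (-B i) := by
          intro j
          rw [← hBalt i, Finset.mul_sum]
          exact Finset.sum_congr rfl fun k _ => by ring
        simp only [inner]
        have : (∑ j, (2 * (A i j * v j)) * (-B i)) = (∑ j, A i j * v j) * (2 * (-B i)) := by
          rw [Finset.sum_mul]
          exact Finset.sum_congr rfl fun j _ => by ring
        rw [this, hBk i]
        ring
      simp only [l1]
      simp only [← Finset.mul_sum, ← hP]
    rw [hsq1, hsq2, hsq3, hct1, hct2, hct3]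
    ring
  have hipX : ip X X = (1/2) * SA := by
    rw [ip_self_eq, ← hA, hSA]
  simp only [hBk, hipX, ← hsv, ← hP]
  nlinarith [hT, hid]

end Helpers3

section Helpers4

variable {n : ℕ}

lemma pointwise (R : Module.End ℝ (so n)) (hsa : selfAdjEnd R) (h2 : twoNonneg R)
    (lmin : ℝ) (hneg : lmin < 0) (X : so n) (hX1 : ip X X = 1) (hXe : R X = lmin • X)
    (Z : so n) : |lmin| * (ip Z Z - 2 * (ip Z X) ^ 2) ≤ ip (R Z) Z := by
  have habs : |lmin| = -lmin := abs_of_neg hneg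
  set c : ℝ := ip Z X with hc
  set W : so n := Z - c • X with hW
  have hWX : ip W X = 0 := by
    rw [hW, ip_sub_left, ip_smul_left, hX1, ← hc]
    ring
  have hXW : ip X W = 0 := by rw [ip_comm]; exact hWX
  have hWW : ip W W = ip Z Z - c ^ 2 := by
    simp only [hW, ip_sub_left, ip_sub_right, ip_smul_left, ip_smul_right, hX1]
    rw [ip_comm X Z, ← hc]
    ring
  have hRWX : ip (R W) X = 0 := by
    rw [hsa W X, hXe, ip_smul_right, hWX, mul_zero]
  have hqZ : ip (R Z) Z = lmin * c ^ 2 + ip (R W) W := by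
    have hZ : Z = W + c • X := by rw [hW]; abel
    calc ip (R Z) Z = ip (R (W + c • X)) (W + c • X) := by rw [← hZ]
      _ = lmin * c ^ 2 + ip (R W) W := by
          rw [map_add, _root_.map_smul, hXe, smul_smul]
          simp only [ip_add_left, ip_add_right, ip_smul_left, ip_smul_right, hX1, hXW, hRWX]
          ring
  have hqW : |lmin| * ip W W ≤ ip (R W) W := by
    by_cases hW0 : W = 0
    · rw [hW0, map_zero]
      simp [ip_zero_left]
    · have hrpos : 0 < ip W W := ip_self_pos W hW0
      set r : ℝ := ip W W with hr
      have hr0 : r ≠ 0 := ne_of_gt hrpos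
      have hs : Real.sqrt r * Real.sqrt r = r := Real.mul_self_sqrt hrpos.le
      have hsne : Real.sqrt r ≠ 0 := by positivity
      set Wn : so n := (Real.sqrt r)⁻¹ • W with hWn
      have hWn1 : ip Wn Wn = 1 := by
        rw [hWn, ip_smul_left, ip_smul_right, ← hr, ← mul_assoc, ← mul_inv, hs]
        exact inv_mul_cancel₀ hr0
      have hXWn : ip X Wn = 0 := by rw [hWn, ip_smul_right, hXW, mul_zero]
      have h22 := h2 X Wn hX1 hWn1 hXWn
      have hRX : ip (R X) X = lmin := by rw [hXe, ip_smul_left, hX1, mul_one]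
      have hRWn : ip (R Wn) Wn = r⁻¹ * ip (R W) W := by
        rw [hWn, _root_.map_smul, ip_smul_left, ip_smul_right, ← mul_assoc, ← mul_inv, hs]
      rw [hRX, hRWn] at h22
      have h24 := mul_nonneg hrpos.le h22
      have h25 : r * (lmin + r⁻¹ * ip (R W) W) = r * lmin + ip (R W) W := by
        rw [mul_add, ← mul_assoc, mul_inv_cancel₀ hr0, one_mul]
      rw [h25] at h24
      rw [habs]
      linarith
  rw [habs, hWW] at hqW
  rw [habs]
  linarith [hqZ, hqW]

end Helpers4

theorem stmt_14' {n : ℕ} (hn : 3 ≤ n) (R : Module.End ℝ (so n)) (hR : isCurvOp R)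
    (h2 : twoNonneg R) (lmin : ℝ)
    (heig : ∃ X : so n, X ≠ 0 ∧ R X = lmin • X)
    (hlb : ∀ X : so n, lmin * ip X X ≤ ip (R X) X) :
    (RicM R - (((n : ℝ) - 3) * |lmin|) • (1 : Mat n)).PosSemidef := by
  obtain ⟨X₀, hX₀ne, hX₀e⟩ := heig
  rw [Matrix.posSemidef_iff_dotProduct_mulVec]
  constructor
  · -- Hermitian
    ext i j
    have h1 : (1 : Mat n) j i = (1 : Mat n) i j := by
      by_cases h : i = j
      · rw [h]
      · rw [Matrix.one_apply_ne h, Matrix.one_apply_ne (Ne.symm h)]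
    simp only [Matrix.conjTranspose_apply, Matrix.sub_apply, Matrix.smul_apply, smul_eq_mul,
      star_trivial]
    rw [ricM_symm R hR.1 i j, h1]
  · intro x
    have hstar : star x = x := funext fun i => star_trivial _
    rw [hstar, Matrix.sub_mulVec, dotProduct_sub, Matrix.smul_mulVec,
      Matrix.one_mulVec, dotProduct_smul]
    have hquad := ric_quad R x
    have hdot : x ⬝ᵥ x = ∑ i, x i * x i := rfl
    have hs0 : 0 ≤ ∑ i, x i * x i := Finset.sum_nonneg fun i _ => mul_self_nonneg _
    have hn3 : (3 : ℝ) ≤ (n : ℝ) := by exact_mod_cast hn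
    have hcard : (Finset.univ : Finset (Fin n)).card = n := by
      rw [Finset.card_univ, Fintype.card_fin]
    rw [smul_eq_mul, hquad, hdot, sub_nonneg]
    rcases le_or_gt 0 lmin with hpos | hneg
    · have habs : |lmin| = lmin := abs_of_nonneg hpos
      have hlow : ∀ k : Fin n, lmin * ((∑ i, x i * x i) - x k * x k)
          ≤ ip (R (vwedge x (evec k))) (vwedge x (evec k)) := by
        intro k
        have h := hlb (vwedge x (evec k))
        rwa [vwedge_evec_self] at h
      have hsum := Finset.sum_le_sum (fun k (_ : k ∈ Finset.univ) => hlow k)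
      have hLHS : ∑ k, lmin * ((∑ i, x i * x i) - x k * x k)
          = lmin * ((n : ℝ) * (∑ i, x i * x i) - (∑ i, x i * x i)) := by
        rw [← Finset.mul_sum, Finset.sum_sub_distrib, Finset.sum_const, hcard, nsmul_eq_mul]
      rw [hLHS] at hsum
      have hls : 0 ≤ lmin * ∑ i, x i * x i := mul_nonneg hpos hs0
      rw [habs]
      nlinarith [hsum, hls, hn3, hs0]
    · have habs : |lmin| = -lmin := abs_of_neg hneg
      have hrpos : 0 < ip X₀ X₀ := ip_self_pos X₀ hX₀ne
      have hr0 : ip X₀ X₀ ≠ 0 := ne_of_gt hrpos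
      have hs : Real.sqrt (ip X₀ X₀) * Real.sqrt (ip X₀ X₀) = ip X₀ X₀ :=
        Real.mul_self_sqrt hrpos.le
      set X : so n := (Real.sqrt (ip X₀ X₀))⁻¹ • X₀ with hX
      have hX1 : ip X X = 1 := by
        rw [hX, ip_smul_left, ip_smul_right, ← mul_assoc, ← mul_inv, hs]
        exact inv_mul_cancel₀ hr0
      have hXe : R X = lmin • X := by
        rw [hX, _root_.map_smul, hX₀e, smul_comm]
      have hpt := fun Z => pointwise R hR.1 h2 lmin hneg X hX1 hXe Z
      have hlow : ∀ k : Fin n,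
          |lmin| * (((∑ i, x i * x i) - x k * x k)
            - 2 * (∑ i, (X : Mat n) k i * x i) ^ 2)
          ≤ ip (R (vwedge x (evec k))) (vwedge x (evec k)) := by
        intro k
        have h := hpt (vwedge x (evec k))
        rw [vwedge_evec_self, ip_vwedge_evec, neg_sq] at h
        exact h
      have hsum := Finset.sum_le_sum (fun k (_ : k ∈ Finset.univ) => hlow k)
      have hLHS : ∑ k, |lmin| * (((∑ i, x i * x i) - x k * x k)
            - 2 * (∑ i, (X : Mat n) k i * x i) ^ 2)
          = |lmin| * (((n : ℝ) * (∑ i, x i * x i) - (∑ i, x i * x i))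
            - 2 * ∑ k, (∑ i, (X : Mat n) k i * x i) ^ 2) := by
        rw [← Finset.mul_sum, Finset.sum_sub_distrib, Finset.sum_sub_distrib,
          Finset.sum_const, hcard, nsmul_eq_mul, ← Finset.mul_sum]
      rw [hLHS] at hsum
      have hsos := skew_sos X x
      rw [hX1, one_mul] at hsos
      have habs' : (0 : ℝ) ≤ |lmin| := abs_nonneg lmin
      have h1 : |lmin| * (∑ k, (∑ i, (X : Mat n) k i * x i) ^ 2)
          ≤ |lmin| * ∑ i, x i * x i :=
        mul_le_mul_of_nonneg_left hsos habs'
      nlinarith [hsum, h1, habs', hs0, hn3]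

/-- For a 2-nonnegative curvature operator `R` with smallest eigenvalue `λ_min`, every
eigenvalue of the Ricci tensor of `R` is at least `(n−3)·|λ_min|`. -/
theorem stmt_14 {n : ℕ} (hn : 3 ≤ n) (R : Module.End ℝ (so n)) (hR : isCurvOp R)
    (h2 : twoNonneg R) (lmin : ℝ)
    (heig : ∃ X : so n, X ≠ 0 ∧ R X = lmin • X)
    (hlb : ∀ X : so n, lmin * ip X X ≤ ip (R X) X) :
    (RicM R - (((n : ℝ) - 3) * |lmin|) • (1 : Mat n)).PosSemidef :=
  stmt_14' hn R hR h2 lmin heig hlb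

end BW
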